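/- Let X be a set, let H ⊆ {−1,+1}^X have VC dimension at most d with d ≥ 1, and let T be a positive integer. Then the class sign(H^{(T)}) = {sign(g) : g = (1/T)·∑_{t=1}^T h_t with h_1,…,h_T ∈ H} has VC dimension at most 4·T·d·ln(4eT). -/

import Mathlib

/-- A class `G` of `±1`-valued functions on `A` shatters the finite set `s` if every
`±1` labeling of `s` is realized by some `g ∈ G`. -/
def Shatters {A : Type*} (G : Set (A → ℝ)) (s : Finset A) : Prop :=
  ∀ σ : A → Bool, ∃ g ∈ G, ∀ a ∈ s, g a = (if σ a then (1 : ℝ) else -1)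

/-- `sign(t) = 1` if `t ≥ 0` and `-1` otherwise. -/
noncomputable def rsign (t : ℝ) : ℝ := if 0 ≤ t then 1 else -1

/-- The class of signs of `T`-wise averages of hypotheses from `H`. -/
noncomputable def signAvgClass {X : Type*} (H : Set (X → ℝ)) (T : ℕ) : Set (X → ℝ) :=
  {f | ∃ h : Fin T → X → ℝ, (∀ t, h t ∈ H) ∧
    f = fun x => rsign ((1 / T : ℝ) * ∑ t, h t x)}

open Finset in
lemma sum_choose_le_exp (d k : ℕ) (hd : 1 ≤ d) (hdk : d ≤ k) :
    (∑ i ∈ Finset.Iic d, (k.choose i : ℝ)) ≤ Real.exp d * ((k : ℝ) / d) ^ d := by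
  have hk : (0 : ℝ) < k := by exact_mod_cast Nat.lt_of_lt_of_le (Nat.lt_of_lt_of_le Nat.zero_lt_one hd) hdk
  have hd' : (0 : ℝ) < d := by exact_mod_cast hd
  set x : ℝ := (d : ℝ) / k with hx
  have hx0 : 0 < x := by positivity
  have hx1 : x ≤ 1 := by
    rw [hx, div_le_one hk]; exact_mod_cast hdk
  have key : (∑ i ∈ Finset.Iic d, (k.choose i : ℝ)) * x ^ d ≤ Real.exp d := by
    rw [Finset.sum_mul]
    have h1 : ∑ i ∈ Finset.Iic d, (k.choose i : ℝ) * x ^ d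
        ≤ ∑ i ∈ Finset.Iic d, (k.choose i : ℝ) * x ^ i := by
      refine Finset.sum_le_sum fun i hi => ?_
      have := pow_le_pow_of_le_one hx0.le hx1 (Finset.mem_Iic.1 hi)
      have hc : (0:ℝ) ≤ k.choose i := by positivity
      nlinarith
    have h2 : ∑ i ∈ Finset.Iic d, (k.choose i : ℝ) * x ^ i
        ≤ ∑ i ∈ Finset.range (k+1), (k.choose i : ℝ) * x ^ i := by
      refine Finset.sum_le_sum_of_subset_of_nonneg ?_ (fun i _ _ => by positivity)
      intro i hi
      simp only [Finset.mem_Iic, Finset.mem_range] at *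
      omega
    have h3 : ∑ i ∈ Finset.range (k+1), (k.choose i : ℝ) * x ^ i = (x + 1) ^ k := by
      rw [add_pow]
      refine Finset.sum_congr rfl fun i hi => by ring
    have h4 : (x + 1) ^ k ≤ Real.exp d := by
      have := Real.add_one_le_exp x
      calc (x + 1) ^ k ≤ (Real.exp x) ^ k := by
            apply pow_le_pow_left₀ (by positivity) this
        _ = Real.exp (x * k) := by rw [← Real.exp_nat_mul]; ring_nf
        _ = Real.exp d := by
            congr 1
            rw [hx, div_mul_cancel₀ _ hk.ne']
    linarith
  have hxd : (0:ℝ) < x ^ d := by positivity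
  rw [← le_div_iff₀ hxd] at key
  calc (∑ i ∈ Finset.Iic d, (k.choose i : ℝ)) ≤ Real.exp d / x ^ d := key
    _ = Real.exp d * ((k : ℝ) / d) ^ d := by
        rw [div_eq_mul_inv, ← inv_pow]
        congr 2
        rw [hx]; field_simp

lemma numeric_step (k d T : ℕ) (hd : 1 ≤ d) (hT : 0 < T) (hdk : d ≤ k)
    (h : (2:ℝ)^k ≤ (Real.exp d * ((k:ℝ)/d)^d)^T) :
    (k:ℝ) ≤ 4 * T * d * Real.log (4 * Real.exp 1 * T) := by
  have hk1 : 1 ≤ k := le_trans hd hdk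
  have hk : (0:ℝ) < k := by exact_mod_cast hk1
  have hd' : (0:ℝ) < d := by exact_mod_cast hd
  have hT' : (0:ℝ) < T := by exact_mod_cast hT
  have hkd : (0:ℝ) < (k:ℝ)/d := by positivity
  set R : ℝ := Real.exp d * ((k:ℝ)/d)^d with hR
  have hR0 : 0 < R := by positivity
  -- take logs
  have hlog : (k:ℝ) * Real.log 2 ≤ (T:ℝ) * ((d:ℝ) * (1 + Real.log ((k:ℝ)/d))) := by
    have h1 : Real.log ((2:ℝ)^k) ≤ Real.log (R^T) :=
      Real.log_le_log (by positivity) h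
    rw [Real.log_pow, Real.log_pow, hR, Real.log_mul (by positivity) (by positivity),
      Real.log_exp, Real.log_pow] at h1
    calc (k:ℝ) * Real.log 2 ≤ (T:ℝ) * ((d:ℝ) + (d:ℝ) * Real.log ((k:ℝ)/d)) := by
          exact_mod_cast h1
      _ = (T:ℝ) * ((d:ℝ) * (1 + Real.log ((k:ℝ)/d))) := by ring
  -- log(k/d) ≤ (k/d)/(4T) + log(4T) - 1
  have hlog2 : Real.log ((k:ℝ)/d) ≤ ((k:ℝ)/d)/(4*T) + Real.log (4*T) - 1 := by
    have h1 : Real.log (((k:ℝ)/d)/(4*T)) ≤ ((k:ℝ)/d)/(4*T) - 1 :=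
      Real.log_le_sub_one_of_pos (by positivity)
    rw [Real.log_div (by positivity) (by positivity)] at h1
    linarith
  have hmain : (k:ℝ) * Real.log 2 ≤ (k:ℝ)/4 + (T:ℝ)*(d:ℝ)*Real.log (4*T) := by
    have step : (T:ℝ) * ((d:ℝ) * (1 + Real.log ((k:ℝ)/d)))
        ≤ (T:ℝ) * ((d:ℝ) * (((k:ℝ)/d)/(4*T) + Real.log (4*T))) := by
      have := hlog2
      have hTd : (0:ℝ) ≤ (T:ℝ)*(d:ℝ) := by positivity
      nlinarith
    have heq : (T:ℝ) * ((d:ℝ) * (((k:ℝ)/d)/(4*T) + Real.log (4*T)))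
        = (k:ℝ)/4 + (T:ℝ)*(d:ℝ)*Real.log (4*T) := by
      field_simp
    linarith
  have hln2 : (1:ℝ)/2 ≤ Real.log 2 := by
    have := Real.log_two_gt_d9
    linarith
  have h4 : (k:ℝ) ≤ 4*(T:ℝ)*(d:ℝ)*Real.log (4*T) := by nlinarith
  have hmono : Real.log (4*(T:ℝ)) ≤ Real.log (4 * Real.exp 1 * T) := by
    apply Real.log_le_log (by positivity)
    have he : (1:ℝ) ≤ Real.exp 1 := by
      have := Real.add_one_le_exp (1:ℝ); linarith
    nlinarith
  calc (k:ℝ) ≤ 4*(T:ℝ)*(d:ℝ)*Real.log (4*T) := h4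
    _ ≤ 4 * T * d * Real.log (4 * Real.exp 1 * T) := by
        have : (0:ℝ) ≤ 4*(T:ℝ)*(d:ℝ) := by positivity
        have hT1 : (1:ℝ) ≤ T := by exact_mod_cast hT
        nlinarith [Real.log_nonneg (show (1:ℝ) ≤ 4*(T:ℝ) by linarith)]

private theorem counting_aux {X : Type*} (H : Set (X → ℝ))
    (hHpm : ∀ h ∈ H, ∀ x, h x = 1 ∨ h x = -1)
    (d : ℕ) (hH : ∀ s : Finset X, Shatters H s → s.card ≤ d)
    (T : ℕ) (s : Finset X) (hs : Shatters (signAvgClass H T) s) :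
    2 ^ s.card ≤ (∑ i ∈ Finset.Iic d, (s.card).choose i) ^ T := by
  classical
  set α := {x // x ∈ s}
  let tr : (X → ℝ) → Finset α := fun h => Finset.univ.filter (fun a => h a.1 = 1)
  let 𝒜 : Finset (Finset α) := (Set.toFinite {u : Finset α | ∃ h ∈ H, tr h = u}).toFinset
  have mem𝒜 : ∀ h ∈ H, tr h ∈ 𝒜 := fun h hh => (Set.Finite.mem_toFinset _).2 ⟨h, hh, rfl⟩
  -- VC dimension of the trace family is at most d
  have hvc : 𝒜.vcDim ≤ d := by
    rw [Finset.vcDim]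
    apply Finset.sup_le
    intro t ht
    rw [Finset.mem_shatterer] at ht
    have hsh : Shatters H (t.image Subtype.val) := by
      intro σ
      obtain ⟨u, hu, htu⟩ := ht (show t.filter (fun a => σ a.1) ⊆ t from Finset.filter_subset _ _)
      obtain ⟨h, hh, rfl⟩ := (Set.Finite.mem_toFinset _).1 hu
      refine ⟨h, hh, ?_⟩
      intro x hx
      obtain ⟨a, ha, rfl⟩ := Finset.mem_image.1 hx
      by_cases hσ : σ a.1
      · rw [if_pos hσ]
        have hmem : a ∈ t ∩ tr h := htu ▸ Finset.mem_filter.2 ⟨ha, hσ⟩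
        exact (Finset.mem_filter.1 (Finset.mem_inter.1 hmem).2).2
      · rw [if_neg hσ]
        rcases hHpm h hh a.1 with h1 | h1
        · exfalso
          have hmem : a ∈ t ∩ tr h :=
            Finset.mem_inter.2 ⟨ha, Finset.mem_filter.2 ⟨Finset.mem_univ _, h1⟩⟩
          rw [htu] at hmem
          exact hσ (Finset.mem_filter.1 hmem).2
        · exact h1
    have hcard := hH _ hsh
    rwa [Finset.card_image_of_injective _ Subtype.val_injective] at hcard
  -- injection from labelings of s into T-tuples of traces
  have hchoice : ∀ σ : α → Bool, ∃ h : Fin T → X → ℝ, (∀ t, h t ∈ H) ∧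
      ∀ a : α, rsign ((1/T:ℝ) * ∑ t, h t a.1) = (if σ a then (1:ℝ) else -1) := by
    intro σ
    obtain ⟨g, hg, hgs⟩ := hs (fun x => if hx : x ∈ s then σ ⟨x, hx⟩ else false)
    obtain ⟨h, hh, rfl⟩ := hg
    refine ⟨h, hh, fun a => ?_⟩
    have h2 := hgs a.1 a.2
    simpa [dif_pos a.2] using h2
  choose hc hc1 hc2 using hchoice
  let Φ : (α → Bool) → (Fin T → {u // u ∈ 𝒜}) := fun σ t => ⟨tr (hc σ t), mem𝒜 _ (hc1 σ t)⟩
  have hΦ : Function.Injective Φ := by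
    intro σ σ' hσσ
    funext a
    have hval : ∀ t : Fin T, hc σ t a.1 = hc σ' t a.1 := by
      intro t
      have htr : tr (hc σ t) = tr (hc σ' t) := by
        have h3 := congrFun hσσ t
        simpa [Φ, Subtype.ext_iff] using h3
      have hmem : (hc σ t a.1 = 1) ↔ (hc σ' t a.1 = 1) := by
        constructor <;> intro h1
        · have h4 : a ∈ tr (hc σ t) := Finset.mem_filter.2 ⟨Finset.mem_univ _, h1⟩
          rw [htr] at h4; exact (Finset.mem_filter.1 h4).2
        · have h4 : a ∈ tr (hc σ' t) := Finset.mem_filter.2 ⟨Finset.mem_univ _, h1⟩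
          rw [← htr] at h4; exact (Finset.mem_filter.1 h4).2
      rcases hHpm _ (hc1 σ t) a.1 with h1 | h1 <;> rcases hHpm _ (hc1 σ' t) a.1 with h2 | h2
      · rw [h1, h2]
      · exfalso; rw [hmem.1 h1] at h2; norm_num at h2
      · exfalso; rw [hmem.2 h2] at h1; norm_num at h1
      · rw [h1, h2]
    have hsum : rsign ((1/T:ℝ) * ∑ t, hc σ t a.1) = rsign ((1/T:ℝ) * ∑ t, hc σ' t a.1) := by
      congr 2
      exact Finset.sum_congr rfl fun t _ => hval t
    have hfin := (hc2 σ a).symm.trans (hsum.trans (hc2 σ' a))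
    by_cases h1 : σ a <;> by_cases h2 : σ' a <;>
      simp [h1, h2] at hfin ⊢ <;> norm_num at hfin
  have hcard : 2 ^ s.card ≤ 𝒜.card ^ T := by
    have h5 := Fintype.card_le_of_injective Φ hΦ
    simp only [Fintype.card_fun, Fintype.card_bool, Fintype.card_coe, Fintype.card_fin] at h5
    have h6 : Fintype.card α = s.card := Fintype.card_coe s
    rwa [h6] at h5
  -- Sauer–Shelah
  have hsauer : 𝒜.card ≤ ∑ i ∈ Finset.Iic d, (s.card).choose i := by
    have h1 := Finset.card_le_card_shatterer 𝒜
    have h2 := Finset.card_shatterer_le_sum_vcDim (𝒜 := 𝒜)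
    have h3 : ∑ i ∈ Finset.Iic 𝒜.vcDim, (Fintype.card α).choose i
        ≤ ∑ i ∈ Finset.Iic d, (Fintype.card α).choose i :=
      Finset.sum_le_sum_of_subset (Finset.Iic_subset_Iic.2 hvc)
    have h4 : Fintype.card α = s.card := Fintype.card_coe s
    calc 𝒜.card ≤ 𝒜.shatterer.card := h1
      _ ≤ ∑ i ∈ Finset.Iic 𝒜.vcDim, (Fintype.card α).choose i := h2
      _ ≤ ∑ i ∈ Finset.Iic d, (Fintype.card α).choose i := h3
      _ = ∑ i ∈ Finset.Iic d, s.card.choose i := by rw [h4]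
  calc 2 ^ s.card ≤ 𝒜.card ^ T := hcard
    _ ≤ (∑ i ∈ Finset.Iic d, (s.card).choose i) ^ T := Nat.pow_le_pow_left hsauer T

/-- **VC dimension of signs of `T`-wise averages (Lemma 4.6).**
If `H` has VC dimension at most `d ≥ 1`, then `sign(H^{(T)})` has VC dimension at most
`4·T·d·ln(4·e·T)`. -/
theorem vc_of_sign_avg {X : Type*} (H : Set (X → ℝ))
    (hHpm : ∀ h ∈ H, ∀ x, h x = 1 ∨ h x = -1)
    (d : ℕ) (hd : 1 ≤ d) (hH : ∀ s : Finset X, Shatters H s → s.card ≤ d)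
    (T : ℕ) (hT : 0 < T) :
    ∀ s : Finset X, Shatters (signAvgClass H T) s →
      (s.card : ℝ) ≤ 4 * T * d * Real.log (4 * Real.exp 1 * T) := by
  intro s hs
  have hT1 : (1:ℝ) ≤ T := by exact_mod_cast hT
  have hL : (1:ℝ) ≤ Real.log (4 * Real.exp 1 * T) := by
    have he : (0:ℝ) < Real.exp 1 := Real.exp_pos 1
    have h1 : Real.exp 1 ≤ 4 * Real.exp 1 * T := by nlinarith
    calc (1:ℝ) = Real.log (Real.exp 1) := (Real.log_exp 1).symm
      _ ≤ _ := Real.log_le_log he h1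
  by_cases hdk : d ≤ s.card
  · -- main case: use the counting bound
    have hcount := counting_aux H hHpm d hH T s hs
    have hsum := sum_choose_le_exp d s.card hd hdk
    have hreal : (2:ℝ) ^ s.card ≤ (Real.exp d * ((s.card:ℝ)/d)^d)^T := by
      have h1 : (2:ℝ) ^ s.card ≤ ((∑ i ∈ Finset.Iic d, (s.card).choose i : ℕ) : ℝ)^T := by
        exact_mod_cast hcount
      have h2 : ((∑ i ∈ Finset.Iic d, (s.card).choose i : ℕ) : ℝ)^T
          ≤ (Real.exp d * ((s.card:ℝ)/d)^d)^T := by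
        apply pow_le_pow_left₀ (by positivity)
        calc ((∑ i ∈ Finset.Iic d, (s.card).choose i : ℕ) : ℝ)
            = ∑ i ∈ Finset.Iic d, ((s.card).choose i : ℝ) := by push_cast; ring
          _ ≤ _ := hsum
      linarith
    exact numeric_step s.card d T hd hT hdk hreal
  · -- trivial case: s.card < d
    push_neg at hdk
    have h1 : (s.card : ℝ) ≤ d := by exact_mod_cast hdk.le
    have hd' : (0:ℝ) ≤ d := by positivity
    calc (s.card : ℝ) ≤ d := h1
      _ ≤ 4 * T * d * Real.log (4 * Real.exp 1 * T) := by
          have h2 : (1:ℝ) ≤ (T:ℝ) * Real.log (4 * Real.exp 1 * T) := by nlinarith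
          nlinarith [mul_le_mul_of_nonneg_left h2 hd']
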